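/- Let $z,w\in\mathbb{C}$ with $|z|^2\ge 1+\delta$ and $|w|^2\ge 1+\delta$ for some $\delta>0$, and let $\widehat\beta,\widehat\beta_* = 1-u_z u_w\operatorname{Re}(z\bar w) \pm \sqrt{m_z^2 m_w^2 - u_z^2 u_w^2(\operatorname{Im}(z\bar w))^2}$, where $m_z,u_z,m_w,u_w$ are the solutions of the scalar Dyson equations at spectral parameter $\mathrm{i}\eta$. Then $\widehat\beta\,\widehat\beta_* = |u_z u_w z\bar w - 1|^2 - m_z^2 m_w^2$, and there exist $c(\delta)>0$ and $\eta_0(\delta)>0$ such that $\widehat\beta\,\widehat\beta_* \ge c(\delta)$ for all $0<\eta\le\eta_0$. -/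

import Mathlib

open Complex
lemma imag_sol (η s : ℝ) (hη : 0 < η) (hs : 1 < s) (m : ℂ) (hm : 0 < m.im)
    (heq : -(1 / m) = Complex.I * η + m - (s:ℂ) / (Complex.I * η + m)) :
    m.re = 0 ∧ m.im * ((m.im + η)^2 + s - 1) = η := by
  have hm0 : m ≠ 0 := fun h => by simp [h] at hm
  have hd : Complex.I * η + m ≠ 0 := by
    intro h
    have h2 := congrArg Complex.im h
    simp at h2
    nlinarith
  have heq2 : m^3 + 2*Complex.I*η*m^2 + (1 - η^2 - s)*m + Complex.I*η = 0 := by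
    field_simp at heq
    linear_combination (-1 : ℂ) * heq + (-(m*(η:ℂ)^2)) * Complex.I_sq
  obtain ⟨a, b⟩ := m
  rw [Complex.ext_iff] at heq2
  simp only [pow_succ, pow_zero, one_mul, Complex.add_re, Complex.add_im, Complex.mul_re, Complex.mul_im, Complex.I_re, Complex.I_im, Complex.ofReal_re, Complex.ofReal_im, Complex.one_re, Complex.one_im, Complex.sub_re, Complex.sub_im, Complex.zero_re, Complex.zero_im] at heq2
  obtain ⟨h1, h2⟩ := heq2
  norm_num at h1 h2
  ring_nf at h1 h2 ⊢
  have hb : 0 < b := hm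
  have ha : a = 0 := by
    by_contra ha
    have hQ : a * (a^2 - 3*b^2 - 4*η*b + 1 - η^2 - s) = 0 := by linear_combination h1
    have hQ2 : a^2 - 3*b^2 - 4*η*b + 1 - η^2 - s = 0 := by
      rcases mul_eq_zero.mp hQ with h | h
      · exact absurd h ha
      · exact h
    nlinarith [mul_pos hb hη, mul_pos hη hη, mul_pos hb hb, mul_pos (mul_pos hb hb) hb, mul_pos (mul_pos hη hη) hη, mul_pos (mul_pos hb hb) hη, mul_pos (mul_pos hη hη) hb]
  subst ha
  constructor
  · rfl
  · linarith [h2]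

lemma u_real (η t : ℝ) (hη : 0 < η) (ht : 0 < t) (u : ℂ)
    (hu : u = Complex.I * (t:ℝ) / (Complex.I * η + Complex.I * (t:ℝ))) :
    u = ((t/(t+η) : ℝ) : ℂ) := by
  have h1 : (Complex.I * (η:ℂ) + Complex.I * (t:ℂ)) ≠ 0 := by
    have : Complex.I * (η:ℂ) + Complex.I * (t:ℂ) = Complex.I * (((η+t : ℝ)):ℂ) := by push_cast; ring
    rw [this]
    exact mul_ne_zero Complex.I_ne_zero (by exact_mod_cast ne_of_gt (by linarith))
  have h2 : ((t+η : ℝ) : ℂ) ≠ 0 := by exact_mod_cast ne_of_gt (by linarith)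
  rw [hu]
  push_cast
  rw [div_eq_div_iff h1 (by exact_mod_cast h2)]
  ring


lemma final_bound (δ η c R I' L p q s s' t t' : ℝ) (hδ : 0 < δ)
    (hc : c = δ^2/(2*(1+δ)^2)) (hη : 0 < η) (hηle : η ≤ δ * Real.sqrt (Real.sqrt c))
    (hz : 1+δ ≤ s) (hw : 1+δ ≤ s') (htpos : 0 < t) (htpos' : 0 < t')
    (ht : t*((t+η)^2+s-1) = η) (ht' : t'*((t'+η)^2+s'-1) = η)
    (hp : p = t/(t+η)) (hq : q = t'/(t'+η))
    (hL0 : 0 ≤ L) (hL2 : L^2 = s*s') (hRL : R ≤ L) (hsq : R^2+I'^2 = L^2) :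
    c ≤ (1 - p*q*R)^2 - (t^2*t'^2 - p^2*q^2*I'^2) := by
  have hc0 : 0 < c := by rw [hc]; positivity
  have hts : 0 < t + η := by linarith
  have hts' : 0 < t' + η := by linarith
  have hppos : 0 < p := hp ▸ div_pos htpos hts
  have hqpos : 0 < q := hq ▸ div_pos htpos' hts'
  have hps : p * s = 1 - t*(t+η) := by
    rw [hp, div_mul_eq_mul_div, div_eq_iff hts.ne']
    linear_combination ht
  have hqs : q * s' = 1 - t'*(t'+η) := by
    rw [hq, div_mul_eq_mul_div, div_eq_iff hts'.ne']
    linear_combination ht'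
  have htt0 : 0 < t*(t+η) := mul_pos htpos hts
  have htt0' : 0 < t'*(t'+η) := mul_pos htpos' hts'
  have hps1 : p * s ≤ 1 := by linarith
  have hqs1 : q * s' ≤ 1 := by linarith
  have hps0 : 0 ≤ p * s := le_of_lt (mul_pos hppos (by linarith))
  have hqs0 : 0 ≤ q * s' := le_of_lt (mul_pos hqpos (by linarith))
  have hA1 : p * q * L^2 ≤ 1 := by
    have h1 : (p*s) * (q*s') ≤ 1 := mul_le_one₀ hps1 hqs0 hqs1
    have h2 : p * q * L^2 = (p*s) * (q*s') := by rw [hL2]; ring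
    linarith
  have hLpos : 1 + δ ≤ L := by
    nlinarith [mul_nonneg (sub_nonneg.2 hz) (sub_nonneg.2 hw), hL2, hL0]
  have hB0 : 0 ≤ p * q * L := by positivity
  have hAL' : p * q * L * (1+δ) ≤ 1 := by
    have h1 : (p*q*L)*(1+δ) ≤ (p*q*L)*L := mul_le_mul_of_nonneg_left hLpos hB0
    have h2 : (p*q*L)*L = p*q*L^2 := by ring
    linarith
  have h2c : (1 - p*q*L)^2 ≤ (1 - p*q*R)^2 + (p*q)^2*I'^2 := by
    have key : (1 - p*q*R)^2 + (p*q)^2*I'^2 - (1 - p*q*L)^2 = 2*(p*q)*(L-R) := by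
      linear_combination (p*q)^2 * hsq
    have h1 : 0 ≤ (p*q)*(L-R) :=
      mul_nonneg (le_of_lt (mul_pos hppos hqpos)) (sub_nonneg.2 hRL)
    linarith
  have h1 : δ/(1+δ) ≤ 1 - p*q*L := by
    rw [div_le_iff₀ (by linarith : (0:ℝ) < 1+δ)]
    linarith [hAL']
  have hlow : (δ/(1+δ))^2 ≤ (1 - p*q*L)^2 := by
    have h0 : 0 ≤ δ/(1+δ) := by positivity
    exact pow_le_pow_left₀ h0 h1 2
  have h2ceq : (δ/(1+δ))^2 = 2*c := by
    rw [hc]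
    field_simp
  have htb : t*δ ≤ η := by
    have h1 : 0 ≤ t*(s-1-δ) := mul_nonneg htpos.le (by linarith)
    have h2 : 0 ≤ t*(t+η)^2 := mul_nonneg htpos.le (sq_nonneg _)
    linarith [ht, h1, h2]
  have htb' : t'*δ ≤ η := by
    have h1 : 0 ≤ t'*(s'-1-δ) := mul_nonneg htpos'.le (by linarith)
    have h2 : 0 ≤ t'*(t'+η)^2 := mul_nonneg htpos'.le (sq_nonneg _)
    linarith [ht', h1, h2]
  set r : ℝ := Real.sqrt (Real.sqrt c) with hr_def
  have hr0 : 0 ≤ r := Real.sqrt_nonneg _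
  have hrc : r^4 = c := by
    have h1 : r^2 = Real.sqrt c := Real.sq_sqrt (Real.sqrt_nonneg c)
    have h2 : (Real.sqrt c)^2 = c := Real.sq_sqrt hc0.le
    calc r^4 = (r^2)^2 := by ring
      _ = c := by rw [h1, h2]
  have htle : t ≤ r := by
    have h1 : t * δ ≤ r * δ := by calc t*δ ≤ η := htb
                                    _ ≤ δ * r := hηle
                                    _ = r * δ := by ring
    exact le_of_mul_le_mul_right h1 hδ
  have htle' : t' ≤ r := by
    have h1 : t' * δ ≤ r * δ := by calc t'*δ ≤ η := htb'
                                     _ ≤ δ * r := hηle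
                                     _ = r * δ := by ring
    exact le_of_mul_le_mul_right h1 hδ
  have htt : t^2 * t'^2 ≤ c := by
    have h1 : t*t' ≤ r*r := mul_le_mul htle htle' htpos'.le hr0
    have h2 : 0 ≤ t*t' := le_of_lt (mul_pos htpos htpos')
    have h3 : (t*t')^2 ≤ (r*r)^2 := pow_le_pow_left₀ h2 h1 2
    have h4 : (r*r)^2 = r^4 := by ring
    have h5 : t^2*t'^2 = (t*t')^2 := by ring
    linarith [hrc]
  linarith [h2c, hlow, h2ceq, htt]

set_option maxHeartbeats 1000000 in
/-- Stability of the two-body operator outside the disk: the product of the nontrivial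
eigenvalues `β̂ β̂_* = (1 - u_z u_w Re(z w̄))² - (m_z² m_w² - u_z² u_w² (Im(z w̄))²)`
equals `|u_z u_w z w̄ - 1|² - m_z² m_w²`, and is bounded below by a constant `c(δ) > 0`
for all sufficiently small `η`, whenever `|z|², |w|² ≥ 1 + δ`. -/
theorem stmt_9 (δ : ℝ) (hδ : 0 < δ) :
    ∃ c > (0 : ℝ), ∃ η₀ > (0 : ℝ), ∀ (η : ℝ), 0 < η → η ≤ η₀ →
      ∀ (z w mz uz mw uw : ℂ),
        1 + δ ≤ ‖z‖ ^ 2 → 1 + δ ≤ ‖w‖ ^ 2 →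
        0 < mz.im →
        -(1 / mz) = Complex.I * η + mz - (‖z‖ : ℂ) ^ 2 / (Complex.I * η + mz) →
        uz = mz / (Complex.I * η + mz) →
        0 < mw.im →
        -(1 / mw) = Complex.I * η + mw - (‖w‖ : ℂ) ^ 2 / (Complex.I * η + mw) →
        uw = mw / (Complex.I * η + mw) →
        (1 - uz * uw * ((z * (starRingEnd ℂ) w).re : ℂ)) ^ 2 -
            (mz ^ 2 * mw ^ 2 - uz ^ 2 * uw ^ 2 * ((z * (starRingEnd ℂ) w).im : ℂ) ^ 2) =
          (‖uz * uw * z * (starRingEnd ℂ) w - 1‖ : ℂ) ^ 2 - mz ^ 2 * mw ^ 2 ∧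
        c ≤ ((1 - uz * uw * ((z * (starRingEnd ℂ) w).re : ℂ)) ^ 2 -
            (mz ^ 2 * mw ^ 2 - uz ^ 2 * uw ^ 2 * ((z * (starRingEnd ℂ) w).im : ℂ) ^ 2)).re := by
  set c : ℝ := δ^2 / (2*(1+δ)^2) with hc_def
  have hc : 0 < c := by positivity
  refine ⟨c, hc, δ * Real.sqrt (Real.sqrt c), by positivity, ?_⟩
  intro η hη hηle z w mz uz mw uw hz hw hmzim hmzeq huzeq hmwim hmweq huweq
  set s : ℝ := ‖z‖ ^ 2 with hs_def
  set s' : ℝ := ‖w‖ ^ 2 with hs'_def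
  have hs1 : 1 < s := by linarith
  have hs1' : 1 < s' := by linarith
  -- convert equations to real-cast form
  have hmzeq' : -(1 / mz) = Complex.I * η + mz - (s:ℂ) / (Complex.I * η + mz) := by
    rw [hmzeq]; norm_cast
  have hmweq' : -(1 / mw) = Complex.I * η + mw - (s':ℂ) / (Complex.I * η + mw) := by
    rw [hmweq]; norm_cast
  obtain ⟨hre, ht⟩ := imag_sol η s hη hs1 mz hmzim hmzeq'
  obtain ⟨hre', ht'⟩ := imag_sol η s' hη hs1' mw hmwim hmweq'
  set t : ℝ := mz.im with ht_def
  set t' : ℝ := mw.im with ht'_def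
  have htpos : 0 < t := hmzim
  have htpos' : 0 < t' := hmwim
  have hmz : mz = Complex.I * (t:ℝ) := by
    apply Complex.ext <;> simp [hre, ht_def]
  have hmw : mw = Complex.I * (t':ℝ) := by
    apply Complex.ext <;> simp [hre', ht'_def]
  set p : ℝ := t/(t+η) with hp_def
  set q : ℝ := t'/(t'+η) with hq_def
  have huz : uz = (p:ℂ) := by
    apply u_real η t hη htpos
    rw [huzeq, hmz]
  have huw : uw = (q:ℂ) := by
    apply u_real η t' hη htpos'
    rw [huweq, hmw]
  -- real-part facts
  set R : ℝ := (z * (starRingEnd ℂ) w).re with hR_def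
  set I' : ℝ := (z * (starRingEnd ℂ) w).im with hI_def
  have habs : (‖(p:ℂ) * (q:ℂ) * z * (starRingEnd ℂ) w - 1‖) ^ 2
      = (p*q*R - 1)^2 + (p*q*I')^2 := by
    rw [Complex.sq_norm, Complex.normSq_apply]
    simp only [hR_def, hI_def, Complex.sub_re, Complex.sub_im, Complex.mul_re, Complex.mul_im,
      Complex.ofReal_re, Complex.ofReal_im, Complex.one_re, Complex.one_im]
    ring
  constructor
  · rw [huz, huw, hmz, hmw]
    rw [show ((‖(p:ℂ) * (q:ℂ) * z * (starRingEnd ℂ) w - 1‖ : ℝ) : ℂ) ^ 2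
        = (((p*q*R - 1)^2 + (p*q*I')^2 : ℝ) : ℂ) from by rw [← Complex.ofReal_pow, habs]]
    push_cast
    ring
  · -- lower bound
    have hEre : ((1 - uz * uw * ((z * (starRingEnd ℂ) w).re : ℂ)) ^ 2 -
        (mz ^ 2 * mw ^ 2 - uz ^ 2 * uw ^ 2 * ((z * (starRingEnd ℂ) w).im : ℂ) ^ 2)).re
        = (1 - p*q*R)^2 - (t^2*t'^2 - p^2*q^2*I'^2) := by
      rw [huz, huw, hmz, hmw]
      have : ((1:ℂ) - (p:ℂ) * (q:ℂ) * (R : ℂ)) ^ 2 -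
          ((Complex.I * (t:ℝ)) ^ 2 * (Complex.I * (t':ℝ)) ^ 2 - (p:ℂ) ^ 2 * (q:ℂ) ^ 2 * (I' : ℂ) ^ 2)
          = (((1 - p*q*R)^2 - (t^2*t'^2 - p^2*q^2*I'^2) : ℝ) : ℂ) := by
        push_cast
        linear_combination (-(t:ℂ)^2*(t':ℂ)^2*(Complex.I^2 - 1)) * Complex.I_sq
      rw [this, Complex.ofReal_re]
    rw [hEre]
    exact final_bound δ η c ((z * (starRingEnd ℂ) w).re) ((z * (starRingEnd ℂ) w).im)
      (‖z‖ * ‖w‖) p q s s' t t' hδ hc_def hη hηle hz hw htpos htpos'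
      ht ht' hp_def hq_def (by positivity) (by rw [hs_def, hs'_def]; ring)
      (Complex.re_le_norm _ |>.trans (by rw [norm_mul, Complex.norm_conj]))
      (by have h3 := Complex.sq_norm (z * (starRingEnd ℂ) w)
          rw [Complex.normSq_apply, norm_mul, Complex.norm_conj] at h3
          linear_combination -h3)
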